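/- Let n ≥ 1 and let A, B be tournament payoff matrices of size 2n+1 with in-degree functions d⁻_A, d⁻_B and out-degree functions d⁺_A, d⁺_B. Suppose that for every k with 1 ≤ k ≤ n, the sum of the k smallest values of d⁻_A is strictly less than the sum of the k smallest values of d⁻_B, and the sum of the k smallest values of d⁺_A is strictly less than the sum of the k smallest values of d⁺_B. Then the in-degree sequence of A strictly majorizes that of B: for every m with 1 ≤ m ≤ 2n, the sum of the m largest values of d⁻_A is strictly greater than the sum of the m largest values of d⁻_B (and the total sums are equal, both being n(2n+1)). -/

import Mathlib

open Matrix

/-- A tournament payoff matrix: zero diagonal, off-diagonal entries `±1`,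
skew-symmetric. -/
def IsTournament {m : ℕ} (A : Matrix (Fin m) (Fin m) ℝ) : Prop :=
  (∀ i, A i i = 0) ∧ ∀ i j : Fin m, i ≠ j → (A i j = 1 ∨ A i j = -1) ∧ A j i = -A i j

/-- The in-degree of vertex `i`: the number of vertices beating `i`. -/
noncomputable def inDeg {m : ℕ} (A : Matrix (Fin m) (Fin m) ℝ) (i : Fin m) : ℝ :=
  (Finset.univ.filter fun j => A i j = -1).card

/-- The out-degree of vertex `i`: the number of vertices `i` beats. -/
noncomputable def outDeg {m : ℕ} (A : Matrix (Fin m) (Fin m) ℝ) (i : Fin m) : ℝ :=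
  (Finset.univ.filter fun j => A i j = 1).card

/-- The sum of the `k` largest values of `x`. -/
noncomputable def topSum {m : ℕ} (x : Fin m → ℝ) (k : ℕ) : ℝ :=
  sSup ((fun s : Finset (Fin m) => ∑ i ∈ s, x i) '' {s | s.card = k})

/-- The sum of the `k` smallest values of `x`. -/
noncomputable def botSum {m : ℕ} (x : Fin m → ℝ) (k : ℕ) : ℝ :=
  sInf ((fun s : Finset (Fin m) => ∑ i ∈ s, x i) '' {s | s.card = k})

lemma aux_finite {M : ℕ} (x : Fin M → ℝ) (k : ℕ) :
    ((fun s : Finset (Fin M) => ∑ i ∈ s, x i) '' {s | s.card = k}).Finite :=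
  (Set.toFinite _).image _

lemma aux_nonempty {M : ℕ} (x : Fin M → ℝ) {k : ℕ} (hk : k ≤ M) :
    ((fun s : Finset (Fin M) => ∑ i ∈ s, x i) '' {s | s.card = k}).Nonempty := by
  obtain ⟨s, -, hs⟩ := Finset.exists_subset_card_eq (s := (Finset.univ : Finset (Fin M))) (n := k) (by simpa using hk)
  exact ⟨_, ⟨s, hs, rfl⟩⟩

lemma topSum_exists {M : ℕ} (x : Fin M → ℝ) {k : ℕ} (hk : k ≤ M) :
    ∃ s : Finset (Fin M), s.card = k ∧ topSum x k = ∑ i ∈ s, x i := by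
  obtain ⟨t, ht, hval⟩ := (aux_nonempty x hk).csSup_mem (aux_finite x k)
  exact ⟨t, ht, hval.symm⟩

lemma le_topSum {M : ℕ} (x : Fin M → ℝ) {k : ℕ} (s : Finset (Fin M)) (hs : s.card = k) :
    ∑ i ∈ s, x i ≤ topSum x k :=
  le_csSup (aux_finite x k).bddAbove ⟨s, hs, rfl⟩

lemma botSum_exists {M : ℕ} (x : Fin M → ℝ) {k : ℕ} (hk : k ≤ M) :
    ∃ s : Finset (Fin M), s.card = k ∧ botSum x k = ∑ i ∈ s, x i := by
  obtain ⟨t, ht, hval⟩ := (aux_nonempty x hk).csInf_mem (aux_finite x k)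
  exact ⟨t, ht, hval.symm⟩

lemma botSum_le {M : ℕ} (x : Fin M → ℝ) {k : ℕ} (s : Finset (Fin M)) (hs : s.card = k) :
    botSum x k ≤ ∑ i ∈ s, x i :=
  csInf_le (aux_finite x k).bddBelow ⟨s, hs, rfl⟩

lemma topSum_add_botSum {M : ℕ} (x : Fin M → ℝ) {k : ℕ} (hk : k ≤ M) :
    topSum x k + botSum x (M - k) = ∑ i, x i := by
  obtain ⟨s, hs, hsv⟩ := topSum_exists x hk
  obtain ⟨t, ht, htv⟩ := botSum_exists x (Nat.sub_le M k)
  have hcs : sᶜ.card = M - k := by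
    simp [Finset.card_compl, hs]
  have hct : tᶜ.card = k := by
    simp [Finset.card_compl, ht]
    omega
  have h1 : botSum x (M - k) ≤ ∑ i ∈ sᶜ, x i := botSum_le x _ hcs
  have h2 : ∑ i ∈ tᶜ, x i ≤ topSum x k := le_topSum x _ hct
  have e1 : ∑ i ∈ sᶜ, x i + ∑ i ∈ s, x i = ∑ i, x i := Finset.sum_compl_add_sum s x
  have e2 : ∑ i ∈ tᶜ, x i + ∑ i ∈ t, x i = ∑ i, x i := Finset.sum_compl_add_sum t x
  linarith

lemma topSum_const_sub {M : ℕ} (x : Fin M → ℝ) (c : ℝ) {k : ℕ} (hk : k ≤ M) :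
    topSum (fun i => c - x i) k = c * k - botSum x k := by
  have key : ∀ s : Finset (Fin M), s.card = k →
      ∑ i ∈ s, (c - x i) = c * k - ∑ i ∈ s, x i := by
    intro s hs
    rw [Finset.sum_sub_distrib, Finset.sum_const, hs, nsmul_eq_mul, mul_comm]
  obtain ⟨s, hs, hsv⟩ := topSum_exists (fun i => c - x i) hk
  obtain ⟨t, ht, htv⟩ := botSum_exists x hk
  have h1 : botSum x k ≤ ∑ i ∈ s, x i := botSum_le x s hs
  have h2 : ∑ i ∈ t, (c - x i) ≤ topSum (fun i => c - x i) k := le_topSum _ t ht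
  have e1 := key s hs
  have e2 := key t ht
  linarith

lemma deg_sum {M : ℕ} {A : Matrix (Fin M) (Fin M) ℝ} (hA : IsTournament A) (i : Fin M) :
    inDeg A i + outDeg A i = (M : ℝ) - 1 := by
  have hM : 1 ≤ M := Nat.one_le_iff_ne_zero.mpr (by rintro rfl; exact i.elim0)
  have hunion : (Finset.univ.filter fun j => A i j = -1) ∪
      (Finset.univ.filter fun j => A i j = 1) = {i}ᶜ := by
    ext j
    simp only [Finset.mem_union, Finset.mem_filter, Finset.mem_univ, true_and,
      Finset.mem_compl, Finset.mem_singleton]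
    constructor
    · rintro (h | h) rfl <;> rw [hA.1] at h <;> norm_num at h
    · intro h
      rcases (hA.2 i j (Ne.symm h)).1 with h1 | h1
      · exact Or.inr h1
      · exact Or.inl h1
  have hdisj : Disjoint (Finset.univ.filter fun j => A i j = -1)
      (Finset.univ.filter fun j => A i j = 1) := by
    rw [Finset.disjoint_left]
    intro a ha hb
    simp only [Finset.mem_filter] at ha hb
    rw [ha.2] at hb
    norm_num at hb
  have hcard : (Finset.univ.filter fun j => A i j = -1).card +
      (Finset.univ.filter fun j => A i j = 1).card = M - 1 := by
    rw [← Finset.card_union_of_disjoint hdisj, hunion]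
    simp [Finset.card_compl]
  unfold inDeg outDeg
  have := congrArg (Nat.cast (R := ℝ)) hcard
  push_cast [Nat.cast_sub hM] at this
  linarith

lemma sum_inDeg_eq_sum_outDeg {M : ℕ} {A : Matrix (Fin M) (Fin M) ℝ} (hA : IsTournament A) :
    ∑ i, inDeg A i = ∑ i, outDeg A i := by
  have hin : ∀ i, inDeg A i = ∑ j, (if A i j = -1 then (1:ℝ) else 0) := by
    intro i; rw [Finset.sum_boole]; rfl
  have hout : ∀ i, outDeg A i = ∑ j, (if A i j = 1 then (1:ℝ) else 0) := by
    intro i; rw [Finset.sum_boole]; rfl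
  simp_rw [hin, hout]
  rw [Finset.sum_comm]
  apply Finset.sum_congr rfl
  intro i _
  apply Finset.sum_congr rfl
  intro j _
  by_cases h : i = j
  · subst h
    rw [hA.1]
    norm_num
  · have h2 := (hA.2 i j h).2
    have : (A j i = -1) ↔ (A i j = 1) := by rw [h2]; constructor <;> intro <;> linarith
    simp [this]

lemma sum_inDeg_eq {n : ℕ} {A : Matrix (Fin (2*n+1)) (Fin (2*n+1)) ℝ} (hA : IsTournament A) :
    ∑ i, inDeg A i = (n : ℝ) * (2 * n + 1) := by
  have h1 : ∑ i, (inDeg A i + outDeg A i) = ((2*n+1 : ℕ) : ℝ) * (((2*n+1 : ℕ) : ℝ) - 1) := by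
    rw [Finset.sum_congr rfl (fun i _ => deg_sum hA i)]
    simp [Finset.card_univ]
  rw [Finset.sum_add_distrib, ← sum_inDeg_eq_sum_outDeg hA] at h1
  push_cast at h1 ⊢
  linarith


/-- If for all `1 ≤ k ≤ n` a `(2n+1)`-tournament `A` has strictly smaller sums of the
`k` smallest in-degrees and of the `k` smallest out-degrees than a tournament `B`,
then the in-degree sequence of `A` strictly majorizes that of `B`: the total sums are
equal (both `n(2n+1)`) and every top-`m` partial sum for `A` strictly exceeds that for
`B`, for `1 ≤ m ≤ 2n`. -/
theorem min_degree_sums_imply_strict_majorization (n : ℕ) (hn : 1 ≤ n)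
    (A B : Matrix (Fin (2 * n + 1)) (Fin (2 * n + 1)) ℝ)
    (hA : IsTournament A) (hB : IsTournament B)
    (hmin : ∀ k : ℕ, 1 ≤ k → k ≤ n →
      botSum (inDeg A) k < botSum (inDeg B) k ∧
      botSum (outDeg A) k < botSum (outDeg B) k) :
    ((∑ i, inDeg A i) = (n : ℝ) * (2 * n + 1) ∧
      (∑ i, inDeg B i) = (n : ℝ) * (2 * n + 1)) ∧
    ∀ m : ℕ, 1 ≤ m → m ≤ 2 * n → topSum (inDeg B) m < topSum (inDeg A) m := by
  refine ⟨⟨sum_inDeg_eq hA, sum_inDeg_eq hB⟩, ?_⟩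
  intro m hm1 hm2
  by_cases hcase : m ≤ n
  · -- use outDeg: inDeg = 2n - outDeg pointwise
    have hfA : inDeg A = fun i => ((2*n : ℕ) : ℝ) - outDeg A i := by
      funext i
      have := deg_sum hA i
      push_cast at this ⊢
      linarith
    have hfB : inDeg B = fun i => ((2*n : ℕ) : ℝ) - outDeg B i := by
      funext i
      have := deg_sum hB i
      push_cast at this ⊢
      linarith
    have hmM : m ≤ 2*n+1 := by omega
    have eA : topSum (inDeg A) m = ((2*n : ℕ) : ℝ) * m - botSum (outDeg A) m := by
      rw [hfA]; exact topSum_const_sub (outDeg A) _ hmM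
    have eB : topSum (inDeg B) m = ((2*n : ℕ) : ℝ) * m - botSum (outDeg B) m := by
      rw [hfB]; exact topSum_const_sub (outDeg B) _ hmM
    have := (hmin m hm1 hcase).2
    rw [eA, eB]
    linarith
  · -- use complement: k = 2n+1-m
    set k := 2*n+1 - m with hk
    have hmM : m ≤ 2*n+1 := by omega
    have hMk : 2*n+1 - m = k := rfl
    have eA := topSum_add_botSum (inDeg A) hmM
    have eB := topSum_add_botSum (inDeg B) hmM
    rw [hMk, sum_inDeg_eq hA] at eA
    rw [hMk, sum_inDeg_eq hB] at eB
    have := (hmin k (by omega) (by omega)).1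
    linarith
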